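/- For every t ≥ 1 one has v^δ_{1,t} = Σ_{k=1}^N ρ_k^{-1} 𝒯_t(λ_k), where δ=(1,0,0,…); moreover, for every T ≥ 1, the T×T connecting matrix C^T_N = (W^T_N)ᵀ W^T_N, where W^T_N:ℝ^T→ℝ^N maps f=(f_0,…,f_{T−1}) to (v^f_{1,T},…,v^f_{N,T}), has entries (C^T_N)_{l+1,m+1} = Σ_{k=1}^N ρ_k^{-1} 𝒯_{T−l}(λ_k) 𝒯_{T−m}(λ_k) for 0 ≤ l,m ≤ T−1. -/
import Mathlib


open scoped BigOperators
open Matrix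

/-- Chebyshev polynomials of the second kind (paper normalization). -/
def chebU (x : ℝ) : ℕ → ℝ
  | 0 => 0
  | 1 => 1
  | t + 2 => x * chebU x (t + 1) - chebU x t

/-- Solution `v^f` of the finite system of size `N` (Dirichlet condition at `n = N+1`). -/
def solF (N : ℕ) (a b f : ℕ → ℝ) : ℕ → ℕ → ℝ
  | n, 0 => if n = 0 then f 0 else 0
  | n, 1 =>
      if n = 0 then f 1
      else if N < n then 0
      else a n * solF N a b f (n + 1) 0 + a (n - 1) * solF N a b f (n - 1) 0
        + b n * solF N a b f n 0
  | n, t + 2 =>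
      if n = 0 then f (t + 2)
      else if N < n then 0
      else a n * solF N a b f (n + 1) (t + 1) + a (n - 1) * solF N a b f (n - 1) (t + 1)
        + b n * solF N a b f n (t + 1) - solF N a b f n t
  termination_by n t => t

/-- `φ_n(λ)`. -/
noncomputable def phiP (a b : ℕ → ℝ) : ℕ → ℝ → ℝ
  | 0, _ => 0
  | 1, _ => 1
  | n + 2, x => ((x - b (n + 1)) * phiP a b (n + 1) x - a n * phiP a b n x) / a (n + 1)

/-- The control `δ = (1,0,0,…)`. -/
def dctrl : ℕ → ℝ := fun t => if t = 0 then 1 else 0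

/-- Extension of a finite control `f = (f_0,…,f_{T-1})` by zero. -/
def ctrl (T : ℕ) (f : Fin T → ℝ) : ℕ → ℝ := fun t => if h : t < T then f ⟨t, h⟩ else 0

/-- The control operator `W^T_N : ℝ^T → ℝ^N`, `f ↦ (v^f_{1,T},…,v^f_{N,T})`, as a matrix. -/
def WFinMat (N : ℕ) (a b : ℕ → ℝ) (T : ℕ) : Matrix (Fin N) (Fin T) ℝ :=
  Matrix.of fun n j => solF N a b (ctrl T (fun k => if k = j then 1 else 0)) ((n : ℕ) + 1) T

/-- Connecting operator `C^T_N = (W^T_N)ᵀ W^T_N`. -/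
def CFinMat (N : ℕ) (a b : ℕ → ℝ) (T : ℕ) : Matrix (Fin T) (Fin T) ℝ :=
  (WFinMat N a b T)ᵀ * WFinMat N a b T

/- ### Auxiliary lemmas -/

lemma phi_rec (a b : ℕ → ℝ) (hapos : ∀ n, 0 < a n) (x : ℝ) (m : ℕ) :
    a (m+1) * phiP a b (m+2) x + a m * phiP a b m x + b (m+1) * phiP a b (m+1) x
      = x * phiP a b (m+1) x := by
  rw [phiP]; field_simp [(hapos (m+1)).ne']; ring

noncomputable def gg (a b : ℕ → ℝ) (x y : ℝ) (n : ℕ) : ℝ :=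
  a n * (phiP a b (n+1) x * phiP a b n y - phiP a b n x * phiP a b (n+1) y)

lemma cross (a b : ℕ → ℝ) (hapos : ∀ n, 0 < a n) (x y : ℝ) (m : ℕ) :
    (x - y) * (phiP a b (m+1) x * phiP a b (m+1) y)
      = gg a b x y (m+1) - gg a b x y m := by
  unfold gg
  linear_combination phiP a b (m+1) x * phi_rec a b hapos y m
    - phiP a b (m+1) y * phi_rec a b hapos x m

lemma ortho (N : ℕ) (a b : ℕ → ℝ) (hapos : ∀ n, 0 < a n) (x y : ℝ)
    (hx : phiP a b (N+1) x = 0) (hy : phiP a b (N+1) y = 0) :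
    (x - y) * ∑ i ∈ Finset.range N, phiP a b (i+1) x * phiP a b (i+1) y = 0 := by
  rw [Finset.mul_sum]
  have : ∀ i ∈ Finset.range N, (x - y) * (phiP a b (i+1) x * phiP a b (i+1) y)
      = gg a b x y (i+1) - gg a b x y i := fun i _ => cross a b hapos x y i
  rw [Finset.sum_congr rfl this, Finset.sum_range_sub (gg a b x y)]
  unfold gg
  simp [phiP, hx, hy]

lemma solF_zero' (N : ℕ) (a b f : ℕ → ℝ) (t : ℕ) : solF N a b f 0 t = f t := by
  match t with
  | 0 => simp [solF]
  | 1 => simp [solF]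
  | t+2 => simp [solF]

lemma solF_nzero (N : ℕ) (a b f : ℕ → ℝ) (n : ℕ) (hn : n ≠ 0) : solF N a b f n 0 = 0 := by
  simp [solF, hn]

lemma solF_step1 (N : ℕ) (a b f : ℕ → ℝ) (n : ℕ) (hn : n ≠ 0) (hN : ¬ N < n) :
    solF N a b f n 1 = a n * solF N a b f (n + 1) 0 + a (n - 1) * solF N a b f (n - 1) 0
        + b n * solF N a b f n 0 := by
  conv_lhs => rw [solF]
  rw [if_neg hn, if_neg hN]

lemma solF_step (N : ℕ) (a b f : ℕ → ℝ) (n t : ℕ) (hn : n ≠ 0) (hN : ¬ N < n) :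
    solF N a b f n (t+2) = a n * solF N a b f (n + 1) (t + 1)
      + a (n - 1) * solF N a b f (n - 1) (t + 1)
      + b n * solF N a b f n (t + 1) - solF N a b f n t := by
  conv_lhs => rw [solF]
  rw [if_neg hn, if_neg hN]

lemma solF_top' (N : ℕ) (a b f : ℕ → ℝ) (n t : ℕ) (h : N < n) : solF N a b f n t = 0 := by
  match t with
  | 0 => rw [solF]; simp; omega
  | 1 => rw [solF]; simp [h]; omega
  | t+2 => rw [solF]; simp [h]; omega

lemma solF_one (N : ℕ) (a b f : ℕ → ℝ) (hf : f 0 = 0) (m : ℕ) (hm : 1 ≤ m) :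
    solF N a b f m 1 = 0 := by
  by_cases h : N < m
  · exact solF_top' N a b f m 1 h
  · rw [solF_step1 N a b f m (by omega) h,
      solF_nzero N a b f (m+1) (by omega), solF_nzero N a b f m (by omega)]
    by_cases h1 : m = 1
    · rw [h1]; simp [solF_zero', hf]
    · rw [solF_nzero N a b f (m-1) (by omega)]; ring

lemma solF_shift (N : ℕ) (a b f : ℕ → ℝ) (hf : f 0 = 0) :
    ∀ t n, 1 ≤ n → solF N a b f n (t+1) = solF N a b (fun s => f (s+1)) n t := by
  intro t
  induction t using Nat.strong_induction_on with
  | _ t ih =>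
    match t with
    | 0 =>
      intro n hn
      rw [solF_one N a b f hf n hn, solF_nzero N a b _ n (by omega)]
    | 1 =>
      intro n hn
      by_cases h : N < n
      · rw [solF_top' N a b f n 2 h, solF_top' N a b (fun s => f (s+1)) n 1 h]
      · rw [solF_step N a b f n 0 (by omega) h,
          solF_step1 N a b (fun s => f (s+1)) n (by omega) h]
        simp only [Nat.zero_add]
        rw [solF_one N a b f hf (n+1) (by omega), solF_one N a b f hf n (by omega),
          solF_nzero N a b f n (by omega)]
        rw [solF_nzero N a b (fun s => f (s+1)) (n+1) (by omega),
          solF_nzero N a b (fun s => f (s+1)) n (by omega)]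
        by_cases h1 : n = 1
        · rw [h1]
          simp [solF_zero']
        · rw [solF_one N a b f hf (n-1) (by omega),
            solF_nzero N a b (fun s => f (s+1)) (n-1) (by omega)]
          ring
    | (t+2) =>
      intro n hn
      by_cases h : N < n
      · rw [solF_top' N a b f n (t+3) h, solF_top' N a b (fun s => f (s+1)) n (t+2) h]
      · rw [solF_step N a b f n (t+1) (by omega) h,
          solF_step N a b (fun s => f (s+1)) n t (by omega) h]
        rw [ih (t+1) (by omega) (n+1) (by omega), ih (t+1) (by omega) n (by omega),
          ih t (by omega) n (by omega)]
        by_cases h1 : n = 1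
        · rw [h1]
          simp [solF_zero']
        · rw [ih (t+1) (by omega) (n-1) (by omega)]

lemma solF_shift_iter (N : ℕ) (a b : ℕ → ℝ) :
    ∀ j (f : ℕ → ℝ), (∀ s, s < j → f s = 0) → ∀ t n, 1 ≤ n →
      solF N a b f n (t+j) = solF N a b (fun s => f (s+j)) n t := by
  intro j
  induction j with
  | zero => intro f _ t n _; rfl
  | succ j ihj =>
    intro f hf t n hn
    have h1 : solF N a b f n ((t+j)+1) = solF N a b (fun s => f (s+1)) n (t+j) :=
      solF_shift N a b f (hf 0 (by omega)) (t+j) n hn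
    have h2 := ihj (fun s => f (s+1)) (fun s hs => hf (s+1) (by omega)) t n hn
    calc solF N a b f n (t+(j+1)) = solF N a b (fun s => f (s+1)) n (t+j) := h1
    _ = solF N a b (fun s => f (s+(j+1))) n t := h2

lemma ctrl_shift (T : ℕ) (j : Fin T) :
    (fun s => ctrl T (fun k => if k = j then (1:ℝ) else 0) (s + (j:ℕ))) = dctrl := by
  funext s
  simp only [ctrl, dctrl]
  rcases Nat.eq_zero_or_pos s with hs | hs
  · subst hs
    simp [Fin.ext_iff, j.isLt]
  · rw [if_neg (by omega : ¬ s = 0)]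
    split_ifs with h h'
    · exfalso
      have : s + (j:ℕ) = (j:ℕ) := Fin.ext_iff.1 h'
      omega
    · rfl
    · rfl

lemma W_entry (N : ℕ) (a b : ℕ → ℝ) (T : ℕ) (n : ℕ) (hn : 1 ≤ n) (j : Fin T) :
    solF N a b (ctrl T (fun k => if k = j then (1:ℝ) else 0)) n T
      = solF N a b dctrl n (T - (j:ℕ)) := by
  have hz : ∀ s, s < (j:ℕ) → ctrl T (fun k => if k = j then (1:ℝ) else 0) s = 0 := by
    intro s hs
    simp only [ctrl]
    split_ifs with h h'
    · exfalso
      have : s = (j:ℕ) := Fin.ext_iff.1 h'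
      omega
    · rfl
    · rfl
  have h1 := solF_shift_iter N a b (j:ℕ) _ hz (T - (j:ℕ)) n hn
  rw [show T - (j:ℕ) + (j:ℕ) = T by omega, ctrl_shift] at h1
  exact h1

section
variable (N : ℕ) (hN : 1 ≤ N) (a b : ℕ → ℝ) (ha0 : a 0 = 1) (hapos : ∀ n, 0 < a n)
    (lam : Fin N → ℝ) (hinj : Function.Injective lam)
    (hroot : ∀ k, phiP a b (N + 1) (lam k) = 0)
    (rho : Fin N → ℝ)
    (hrho : ∀ k, rho k = ∑ i ∈ Finset.Icc 1 N, (phiP a b i (lam k)) ^ 2)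

include hrho in
lemma rho_sum (k : Fin N) :
    rho k = ∑ i ∈ Finset.range N, phiP a b (i+1) (lam k) * phiP a b (i+1) (lam k) := by
  rw [hrho k, show Finset.Icc 1 N = Finset.Ico 1 (N+1) from (Finset.Ico_add_one_right_eq_Icc 1 N).symm,
    Finset.sum_Ico_eq_sum_range]
  simp [sq, add_comm 1]

include hN hrho in
lemma rho_pos (k : Fin N) : 0 < rho k := by
  have h1 : (1:ℕ) ∈ Finset.Icc 1 N := by simp [hN]
  rw [hrho k]
  have : phiP a b 1 (lam k) = 1 := rfl
  nlinarith [Finset.single_le_sum (f := fun i => (phiP a b i (lam k))^2)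
    (fun (i:ℕ) _ => sq_nonneg (phiP a b i (lam k))) h1]

noncomputable def Phim : Matrix (Fin N) (Fin N) ℝ :=
  Matrix.of fun k i => phiP a b ((i:ℕ)+1) (lam k)

include hrho hapos hinj hroot in
lemma PhiD : Phim N a b lam * (Phim N a b lam)ᵀ = Matrix.diagonal rho := by
  ext k k'
  rw [Matrix.mul_apply]
  simp only [Phim, Matrix.transpose_apply, Matrix.of_apply, Matrix.diagonal]
  rw [Fin.sum_univ_eq_sum_range (fun i => phiP a b (i+1) (lam k) * phiP a b (i+1) (lam k'))]
  by_cases h : k = k'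
  · subst h; simp [← rho_sum N a b lam rho hrho (k := k)]
  · have hne : lam k - lam k' ≠ 0 := sub_ne_zero.2 (fun hc => h (hinj hc))
    have := ortho N a b hapos (lam k) (lam k') (hroot k) (hroot k')
    simp only [Matrix.of_apply, h, if_neg h]
    rcases mul_eq_zero.1 this with h' | h'
    · exact absurd h' hne
    · simpa [h] using h'

include hN hapos hinj hroot hrho in
lemma completeness (i j : Fin N) :
    ∑ k, (rho k)⁻¹ * (phiP a b ((i:ℕ)+1) (lam k) * phiP a b ((j:ℕ)+1) (lam k))
      = if i = j then 1 else 0 := by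
  have hρ : ∀ k, rho k ≠ 0 := fun k => (rho_pos N hN a b lam rho hrho k).ne'
  have hD := PhiD N a b hapos lam hinj hroot rho hrho
  have h1 : Phim N a b lam * ((Phim N a b lam)ᵀ * Matrix.diagonal (fun k => (rho k)⁻¹)) = 1 := by
    rw [← Matrix.mul_assoc, hD, Matrix.diagonal_mul_diagonal]
    rw [show (fun k => rho k * (rho k)⁻¹) = fun _ => (1:ℝ) by
      funext k; exact mul_inv_cancel₀ (hρ k)]
    exact Matrix.diagonal_one
  have h2 := mul_eq_one_comm.1 h1
  have h3 := congrFun (congrFun h2 i) j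
  simp only [Matrix.diagonal_apply, Matrix.mul_apply, Matrix.transpose_apply, Matrix.of_apply,
    mul_ite, mul_zero, Finset.sum_ite_eq', Finset.mem_univ, if_true, Matrix.one_apply,
    Phim] at h3
  rw [← h3]
  apply Finset.sum_congr rfl
  intro k _
  ring

include hN ha0 hapos hroot in
lemma main_rep
    (hcomp : ∀ i j : Fin N, ∑ k, (rho k)⁻¹ * (phiP a b ((i:ℕ)+1) (lam k) * phiP a b ((j:ℕ)+1) (lam k))
      = if i = j then 1 else 0) :
    ∀ t n, 1 ≤ n → n ≤ N + 1 →
      solF N a b dctrl n t = ∑ k, (rho k)⁻¹ * (phiP a b n (lam k) * chebU (lam k) t) := by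
  intro t
  induction t using Nat.strong_induction_on with
  | _ t ih =>
    match t with
    | 0 =>
      intro n hn1 hn2
      rw [solF]
      simp [chebU, Nat.pos_iff_ne_zero.1 hn1]
    | 1 =>
      intro n hn1 hn2
      by_cases hn : N < n
      · have hnn : n = N + 1 := by omega
        rw [solF_top' _ _ _ _ _ _ hn, hnn]
        simp [hroot]
      · have h0 : n ≠ 0 := by omega
        have hle : n - 1 < N := by omega
        have hc := hcomp ⟨n - 1, hle⟩ ⟨0, by omega⟩
        simp only [Fin.mk.injEq] at hc
        rw [show (n - 1 : ℕ) + 1 = n by omega] at hc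
        have hc2 : (∑ k, (rho k)⁻¹ * (phiP a b n (lam k) * chebU (lam k) 1))
            = if n - 1 = 0 then (1:ℝ) else 0 := hc
        rw [solF, if_neg h0, if_neg hn, hc2, solF, solF, solF]
        simp only [dctrl, if_neg (show ¬ n + 1 = 0 by omega), if_neg h0]
        by_cases h1 : n - 1 = 0
        · simp [h1, ha0]
        · simp [h1]
    | (t+2) =>
      intro n hn1 hn2
      by_cases hn : N < n
      · have hnn : n = N + 1 := by omega
        rw [solF_top' _ _ _ _ _ _ hn, hnn]
        simp [hroot]
      · obtain ⟨m, rfl⟩ : ∃ m, n = m + 1 := ⟨n - 1, by omega⟩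
        rw [solF]
        rw [if_neg (by omega : ¬ m + 1 = 0), if_neg hn]
        rw [ih (t+1) (by omega) (m+2) (by omega) (by omega)]
        rw [ih t (by omega) (m+1) (by omega) (by omega)]
        rw [ih (t+1) (by omega) (m+1) (by omega) (by omega)]
        have hprev : solF N a b dctrl m (t+1)
            = ∑ k, (rho k)⁻¹ * (phiP a b m (lam k) * chebU (lam k) (t+1)) := by
          rcases Nat.eq_zero_or_pos m with hm | hm
          · subst hm
            rw [solF_zero']
            simp [dctrl, phiP]
          · obtain ⟨p, rfl⟩ : ∃ p, m = p + 1 := ⟨m - 1, by omega⟩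
            exact ih (t+1) (by omega) (p+1) (by omega) (by omega)
        simp only [Nat.add_sub_cancel]
        rw [hprev]
        rw [Finset.mul_sum, Finset.mul_sum, Finset.mul_sum, ← Finset.sum_add_distrib,
          ← Finset.sum_add_distrib, ← Finset.sum_sub_distrib]
        apply Finset.sum_congr rfl
        intro k _
        have hr := phi_rec a b hapos (lam k) m
        have hc : chebU (lam k) (t+2) = lam k * chebU (lam k) (t+1) - chebU (lam k) t := rfl
        rw [hc]
        linear_combination (rho k)⁻¹ * chebU (lam k) (t+1) * hr
end

/-- spectral representations of the response vector
`v^δ_{1,t} = Σ_k ρ_k⁻¹ 𝒯_t(λ_k)` and of the entries of the connecting operator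
`(C^T_N)_{l+1,m+1} = Σ_k ρ_k⁻¹ 𝒯_{T-l}(λ_k) 𝒯_{T-m}(λ_k)`. -/
theorem finite_response_and_connecting_spectral_representation
    (N : ℕ) (hN : 1 ≤ N) (a b : ℕ → ℝ) (ha0 : a 0 = 1) (hapos : ∀ n, 0 < a n)
    (lam : Fin N → ℝ) (hinj : Function.Injective lam)
    (hroot : ∀ k, phiP a b (N + 1) (lam k) = 0)
    (rho : Fin N → ℝ)
    (hrho : ∀ k, rho k = ∑ i ∈ Finset.Icc 1 N, (phiP a b i (lam k)) ^ 2) :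
    (∀ t : ℕ, 1 ≤ t →
        solF N a b dctrl 1 t = ∑ k : Fin N, (rho k)⁻¹ * chebU (lam k) t) ∧
    (∀ T : ℕ, 1 ≤ T → ∀ l m : Fin T,
        CFinMat N a b T l m
          = ∑ k : Fin N, (rho k)⁻¹ * chebU (lam k) (T - (l : ℕ)) * chebU (lam k) (T - (m : ℕ))) := by
  have hcomp := completeness N hN a b hapos lam hinj hroot rho hrho
  have hmain := main_rep N hN a b ha0 hapos lam hroot rho hcomp
  have hρ : ∀ k, rho k ≠ 0 := fun k => (rho_pos N hN a b lam rho hrho k).ne'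
  constructor
  · intro t ht
    rw [hmain t 1 le_rfl (by omega)]
    apply Finset.sum_congr rfl
    intro k _
    have : phiP a b 1 (lam k) = 1 := rfl
    rw [this, one_mul]
  · intro T hT l m
    set E : Matrix (Fin N) (Fin N) ℝ := Matrix.diagonal (fun k => (rho k)⁻¹) with hE
    set U : Matrix (Fin N) (Fin T) ℝ :=
      Matrix.of (fun k j => chebU (lam k) (T - (j:ℕ))) with hU
    have hW : WFinMat N a b T = (Phim N a b lam)ᵀ * (E * U) := by
      ext n j
      rw [WFinMat, Matrix.of_apply, W_entry N a b T ((n:ℕ)+1) (by omega) j,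
        hmain (T - (j:ℕ)) ((n:ℕ)+1) (by omega) (by omega)]
      rw [Matrix.mul_apply]
      apply Finset.sum_congr rfl
      intro k _
      rw [hE, hU, Matrix.transpose_apply, Matrix.diagonal_mul, Matrix.of_apply, Phim,
        Matrix.of_apply]
      ring
    have hDE : Matrix.diagonal rho * E = 1 := by
      rw [hE, Matrix.diagonal_mul_diagonal]
      rw [show (fun k => rho k * (rho k)⁻¹) = fun _ => (1:ℝ) by
        funext k; exact mul_inv_cancel₀ (hρ k)]
      exact Matrix.diagonal_one
    have hD := PhiD N a b hapos lam hinj hroot rho hrho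
    have hC : CFinMat N a b T = (E * U)ᵀ * U := by
      rw [CFinMat, hW, Matrix.transpose_mul, Matrix.transpose_transpose,
        Matrix.mul_assoc, ← Matrix.mul_assoc (Phim N a b lam), hD,
        ← Matrix.mul_assoc (Matrix.diagonal rho), hDE, Matrix.one_mul]
    rw [hC, Matrix.mul_apply]
    apply Finset.sum_congr rfl
    intro k _
    rw [Matrix.transpose_apply, hE, hU, Matrix.diagonal_mul, Matrix.of_apply, Matrix.of_apply]
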